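/- Let m, n ≥ 1 and let F : Paths C_m ⥤ Paths C_n be any functor between the free categories on the cyclic quivers. Then n divides S(F) := Σ_{v : ZMod m} length (F.map e_v). (Hence the degree deg F := S(F) / n of F is a well-defined natural number.) -/

import Mathlib

open CategoryTheory

/-- The cyclic quiver `C n`: vertex set `ZMod n`, with exactly one arrow `v ⟶ v + 1` for each
vertex `v`, and no other arrows. -/
abbrev CyclicQuiver (n : ℕ) := ZMod n

instance (n : ℕ) : Quiver (CyclicQuiver n) :=
  ⟨fun a b => PLift (b = a + 1)⟩

/-- The unique arrow `e_v : v ⟶ v + 1` of the cyclic quiver. -/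
def cyclicArrow (n : ℕ) (v : CyclicQuiver n) : v ⟶ (v + 1 : ZMod n) := ⟨rfl⟩

lemma path_len (n : ℕ) {a b : CyclicQuiver n} (p : Quiver.Path a b) :
    (p.length : ZMod n) = b - a := by
  induction p with
  | nil => simp
  | cons p e ih =>
    obtain ⟨rfl⟩ := e
    simp [Quiver.Path.length, ih]
    ring

/-- For `m, n ≥ 1` and any functor `F : Paths C_m ⥤ Paths C_n`, the total
length `S(F) = Σ_v length (F.map e_v)` is divisible by `n`; hence `deg F = S(F)/n` is a
well-defined natural number. -/
theorem stmt_11 (m n : ℕ) [NeZero m] [NeZero n]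
    (F : Paths (CyclicQuiver m) ⥤ Paths (CyclicQuiver n)) :
    n ∣ ∑ v : ZMod m, Quiver.Path.length (F.map ((Paths.of (CyclicQuiver m)).map (cyclicArrow m v))) := by
  rw [← ZMod.natCast_eq_zero_iff]
  push_cast
  let f : ZMod m → ZMod n := fun v => F.obj ((Paths.of (CyclicQuiver m)).obj v)
  have : ∀ v : ZMod m,
      ((F.map ((Paths.of (CyclicQuiver m)).map (cyclicArrow m v))).length : ZMod n)
        = f (v + 1) - f v := fun v =>
    path_len n _
  rw [Finset.sum_congr rfl fun v _ => this v, Finset.sum_sub_distrib]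
  rw [show (∑ x : ZMod m, f (x + 1)) = ∑ x : ZMod m, f x from Fintype.sum_equiv (Equiv.addRight (1 : ZMod m)) _ f (fun i => rfl), sub_self]
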